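/- Every finitely generated infinite group has a just-infinite quotient; that is, there exists a normal subgroup N of G such that G/N is infinite but every proper quotient of G/N is finite. -/

import Mathlib

theorem exists_just_infinite_quotient (G : Type*) [Group G] [Group.FG G] [Infinite G] :
    ∃ N : Subgroup G, ∃ _ : N.Normal, Infinite (G ⧸ N) ∧
      ∀ M : Subgroup (G ⧸ N), M.Normal → M ≠ ⊥ → M.FiniteIndex := by
  classical
  set s : Set (Subgroup G) := {N | N.Normal ∧ Infinite (G ⧸ N)} with hs
  have hbot : (⊥ : Subgroup G) ∈ s := by
    refine ⟨inferInstance, ?_⟩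
    exact Equiv.infinite_iff (QuotientGroup.quotientBot (G := G)).toEquiv |>.mpr ‹_›
  have ih : ∀ c ⊆ s, IsChain (· ≤ ·) c → ∀ y ∈ c, ∃ ub ∈ s, ∀ z ∈ c, z ≤ ub := by
    intro c hcs hc y hy
    have hcne : c.Nonempty := ⟨y, hy⟩
    have hdir : DirectedOn (· ≤ ·) c := hc.directedOn
    refine ⟨sSup c, ⟨?_, ?_⟩, fun z hz => le_sSup hz⟩
    · -- normality of directed sup
      constructor
      intro n hn g
      rw [Subgroup.mem_sSup_of_directedOn hcne hdir] at hn ⊢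
      obtain ⟨H, hHc, hnH⟩ := hn
      exact ⟨H, hHc, (hcs hHc).1.conj_mem n hnH g⟩
    · -- infinite quotient
      by_contra hfin
      rw [not_infinite_iff_finite] at hfin
      haveI : Finite (G ⧸ sSup c) := hfin
      haveI : (sSup c).FiniteIndex := Subgroup.finiteIndex_of_finite_quotient
      haveI hfg : Group.FG ↥(sSup c) := inferInstance
      obtain ⟨T, hTle, hTfin⟩ := (Subgroup.fg_iff (sSup c)).mp
        ((Group.fg_iff_subgroup_fg _).mp hfg)
      -- every element of T lies in some member of the chain; find a common member
      have key : ∀ t : Set G, t.Finite →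
          (t ⊆ ((sSup c : Subgroup G) : Set G) → ∃ H ∈ c, t ⊆ ↑H) := by
        intro t ht
        refine Set.Finite.induction_on t ht
          (motive := fun t _ => t ⊆ ((sSup c : Subgroup G) : Set G) → ∃ H ∈ c, t ⊆ ↑H) ?_ ?_
        · exact fun _ => ⟨y, hy, by simp⟩
        · rintro a t' - - ihh hsub
          obtain ⟨H, hHc, hHt⟩ := ihh fun x hx => hsub (Set.mem_insert_of_mem _ hx)
          obtain ⟨H', hH'c, haH'⟩ := (Subgroup.mem_sSup_of_directedOn hcne hdir).mp
            (hsub (Set.mem_insert _ _))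
          obtain ⟨H'', hH''c, h1, h2⟩ := hdir H hHc H' hH'c
          exact ⟨H'', hH''c, Set.insert_subset_iff.mpr ⟨h2 haH', fun x hx => h1 (hHt hx)⟩⟩
      obtain ⟨H, hHc, hTH⟩ := key T hTfin (hTle ▸ Subgroup.subset_closure)
      have hHeq : H = sSup c := le_antisymm (le_sSup hHc)
        (by rw [← hTle]; exact (Subgroup.closure_le _).mpr hTH)
      haveI : Infinite (G ⧸ sSup c) := by rw [← hHeq]; exact (hcs hHc).2
      exact not_finite (G ⧸ sSup c)
  obtain ⟨N, -, hNs, hmax⟩ := zorn_le_nonempty₀ s ih ⊥ hbot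
  obtain ⟨hNnorm, hNinf⟩ := hNs
  haveI := hNnorm
  haveI := hNinf
  refine ⟨N, hNnorm, hNinf, ?_⟩
  intro M hMnorm hMne
  haveI := hMnorm
  set P : Subgroup G := M.comap (QuotientGroup.mk' N) with hP
  have hPnorm : P.Normal := hMnorm.comap _
  have hsurj : Function.Surjective (QuotientGroup.mk' N) := QuotientGroup.mk'_surjective N
  have hPfin : ¬ Infinite (G ⧸ P) := by
    intro hPinf
    have hPs : P ∈ s := ⟨hPnorm, hPinf⟩
    have hNP : N ≤ P := by
      intro x hx
      show (QuotientGroup.mk' N) x ∈ M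
      rw [show (QuotientGroup.mk' N) x = 1 from (QuotientGroup.eq_one_iff x).mpr hx]
      exact M.one_mem
    have hPN : P = N := le_antisymm (hmax hPs hNP) hNP
    apply hMne
    have hmap : M = Subgroup.map (QuotientGroup.mk' N) P :=
      (Subgroup.map_comap_eq_self_of_surjective hsurj M).symm
    rw [hmap, hPN, QuotientGroup.map_mk'_self]
  rw [not_infinite_iff_finite] at hPfin
  haveI : Finite (G ⧸ P) := hPfin
  haveI : P.FiniteIndex := Subgroup.finiteIndex_of_finite_quotient
  constructor
  rw [← Subgroup.index_comap_of_surjective M hsurj]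
  exact this.index_ne_zero
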